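/- arXiv:1108.3666 — 2 statements merged into one kernel-verified Lean document; each statement's English description precedes it below -/
import Mathlib

section
/- Let λ = (λ₁,...,λ_h) be a partition of n with λ₁ ≥ 3n/4 and set A = n − λ₁. Then the dimension of the irreducible representation of S_n indexed by λ satisfies χ^λ(1) ≥ (n/(2A))^A; in particular, if A > √n then χ^λ(1) ≥ 2^{√n}. -/
/-- A standard Young tableau of shape `μ` (with `μ.card = n` cells): a semistandard
tableau which is strictly increasing along rows, with entries among `1, ..., n`,
all distinct. -/
def IsStandardYT (μ : YoungDiagram) (T : SemistandardYoungTableau μ) : Prop :=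
  (∀ i j1 j2 : ℕ, j1 < j2 → (i, j2) ∈ μ → T i j1 < T i j2) ∧
  (∀ c ∈ μ.cells, T c.1 c.2 ∈ Finset.Icc 1 μ.card) ∧
  Set.InjOn (fun c : ℕ × ℕ => T c.1 c.2) ↑μ.cells

/-- The number `f^μ` of standard Young tableaux of shape `μ`, i.e. the dimension of the
irreducible representation of `S_n` indexed by `μ`. -/
noncomputable def fSYT (μ : YoungDiagram) : ℕ :=
  Nat.card {T : SemistandardYoungTableau μ // IsStandardYT μ T}

open Finset
namespace Stmt10Aux

/-- cells strictly below the first row -/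
def D (μ : YoungDiagram) : Finset (ℕ × ℕ) := μ.cells.filter fun c => c.1 ≠ 0

def en (μ : YoungDiagram) (c : ℕ × ℕ) : ℕ := c.1 * μ.card + c.2

def rnk (μ : YoungDiagram) (c : ℕ × ℕ) : ℕ :=
  (((D μ).image (en μ)).filter fun x => x < en μ c).card

/-- k-th smallest element of a finset of naturals -/
def sEl (s : Finset ℕ) (k : ℕ) : ℕ := (s.sort (· ≤ ·)).getD k 0

lemma sEl_mem {s : Finset ℕ} {k : ℕ} (hk : k < s.card) : sEl s k ∈ s := by
  have hl : (s.sort (· ≤ ·)).length = s.card := s.length_sort _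
  rw [sEl, List.getD_eq_getElem _ _ (by omega)]
  exact (Finset.mem_sort _).mp (List.getElem_mem _)

lemma sEl_lt {s : Finset ℕ} {k1 k2 : ℕ} (h : k1 < k2) (hk : k2 < s.card) :
    sEl s k1 < sEl s k2 := by
  have hl : (s.sort (· ≤ ·)).length = s.card := s.length_sort _
  have hs : (s.sort (· ≤ ·)).Pairwise (· < ·) := s.sortedLT_sort.pairwise
  rw [sEl, sEl, List.getD_eq_getElem _ _ (by omega), List.getD_eq_getElem _ _ (by omega)]
  exact List.pairwise_iff_getElem.mp hs _ _ _ _ h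

lemma sEl_image (s : Finset ℕ) : (Finset.range s.card).image (sEl s) = s := by
  apply Finset.Subset.antisymm
  · intro x hx
    simp only [Finset.mem_image, Finset.mem_range] at hx
    obtain ⟨k, hk, rfl⟩ := hx
    exact sEl_mem hk
  · intro x hx
    have : x ∈ s.sort (· ≤ ·) := (Finset.mem_sort _).mpr hx
    obtain ⟨k, hk, hkx⟩ := List.mem_iff_getElem.mp this
    have hl : (s.sort (· ≤ ·)).length = s.card := s.length_sort _
    refine Finset.mem_image.mpr ⟨k, Finset.mem_range.mpr (by omega), ?_⟩
    rw [sEl, List.getD_eq_getElem _ _ hk, hkx]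


lemma mem_D {μ : YoungDiagram} {c : ℕ × ℕ} : c ∈ D μ ↔ c ∈ μ ∧ c.1 ≠ 0 := by
  simp [D, YoungDiagram.mem_cells]

lemma snd_lt_card {μ : YoungDiagram} {c : ℕ × ℕ} (hc : c ∈ μ) : c.2 < μ.card := by
  have h1 : c.2 < μ.rowLen c.1 := by
    rw [← YoungDiagram.mem_iff_lt_rowLen]; simpa using hc
  have h2 : μ.rowLen c.1 ≤ μ.card := by
    rw [YoungDiagram.rowLen_eq_card, YoungDiagram.row]
    exact Finset.card_filter_le _ _
  omega

lemma en_injOn (μ : YoungDiagram) : Set.InjOn (en μ) ↑μ.cells := by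
  intro c hc c' hc' h
  simp only [Finset.coe_filter, Set.mem_setOf_eq, Finset.mem_coe, YoungDiagram.mem_cells] at hc hc'
  have h1 := snd_lt_card hc
  have h2 := snd_lt_card hc'
  have hn : 0 < μ.card := by omega
  simp only [en] at h
  have : c.1 = c'.1 := by
    rcases Nat.lt_trichotomy c.1 c'.1 with hl | he | hl
    · nlinarith
    · exact he
    · nlinarith
  have h2' : c.2 = c'.2 := by rw [this] at h; omega
  exact Prod.ext this h2'

lemma en_injOn_D (μ : YoungDiagram) : Set.InjOn (en μ) ↑(D μ) := by
  apply (en_injOn μ).mono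
  intro c hc
  simp only [Finset.mem_coe, mem_D] at hc
  simpa [YoungDiagram.mem_cells] using hc.1

lemma card_image_en (μ : YoungDiagram) : ((D μ).image (en μ)).card = (D μ).card :=
  Finset.card_image_of_injOn (en_injOn_D μ)

lemma rnk_lt {μ : YoungDiagram} {c : ℕ × ℕ} (hc : c ∈ D μ) : rnk μ c < (D μ).card := by
  rw [← card_image_en μ, rnk]
  apply Finset.card_lt_card
  constructor
  · exact Finset.filter_subset _ _
  · intro hsub
    have := hsub (Finset.mem_image_of_mem (en μ) hc)
    simp at this

lemma rnk_strict {μ : YoungDiagram} {c c' : ℕ × ℕ} (hc : c ∈ D μ) (hc' : c' ∈ D μ)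
    (h : en μ c < en μ c') : rnk μ c < rnk μ c' := by
  apply Finset.card_lt_card
  constructor
  · intro x hx
    simp only [Finset.mem_filter] at hx ⊢
    exact ⟨hx.1, by omega⟩
  · intro hsub
    have hm : en μ c ∈ ((D μ).image (en μ)).filter fun x => x < en μ c' := by
      simp only [Finset.mem_filter]
      exact ⟨Finset.mem_image_of_mem _ hc, h⟩
    have := hsub hm
    simp at this

lemma rnk_injOn (μ : YoungDiagram) : Set.InjOn (rnk μ) ↑(D μ) := by
  intro c hc c' hc' h
  apply en_injOn_D μ hc hc'
  rcases Nat.lt_trichotomy (en μ c) (en μ c') with hl | he | hl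
  · exact absurd h (Nat.ne_of_lt (rnk_strict hc hc' hl))
  · exact he
  · exact absurd h.symm (Nat.ne_of_lt (rnk_strict hc' hc hl))

lemma rnk_image (μ : YoungDiagram) : (D μ).image (rnk μ) = Finset.range (D μ).card := by
  apply Finset.eq_of_subset_of_card_le
  · intro x hx
    simp only [Finset.mem_image] at hx
    obtain ⟨c, hc, rfl⟩ := hx
    exact Finset.mem_range.mpr (rnk_lt hc)
  · rw [Finset.card_range, Finset.card_image_of_injOn (rnk_injOn μ)]


section cards
variable (μ : YoungDiagram)

lemma rowLen_eq_filter (i : ℕ) : μ.rowLen i = (μ.cells.filter fun c => c.1 = i).card := by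
  rw [YoungDiagram.rowLen_eq_card, YoungDiagram.row]

lemma card_D : (D μ).card = μ.card - μ.rowLen 0 := by
  have h := Finset.card_filter_add_card_filter_not (s := μ.cells)
    (p := fun c : ℕ × ℕ => c.1 = 0)
  have h0 : μ.rowLen 0 = (μ.cells.filter fun c => c.1 = 0).card := rowLen_eq_filter μ 0
  have hD : (D μ).card = (μ.cells.filter fun a => ¬(fun c : ℕ × ℕ => c.1 = 0) a).card := by
    simp only [D, ne_eq]
  rw [hD, rowLen_eq_filter]
  exact Nat.eq_sub_of_add_eq' h

lemma rowLen0_le : μ.rowLen 0 ≤ μ.card := by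
  rw [rowLen_eq_filter]; exact Finset.card_filter_le _ _

lemma rowLen1_le_cardD : μ.rowLen 1 ≤ (D μ).card := by
  rw [rowLen_eq_filter]
  apply Finset.card_le_card
  intro c hc
  simp only [D, Finset.mem_filter] at hc ⊢
  exact ⟨hc.1, by omega⟩

lemma rowLen1_le_rowLen0 : μ.rowLen 1 ≤ μ.rowLen 0 := μ.rowLen_anti 0 1 (by omega)

end cards


section tableau
variable (μ : YoungDiagram) (S : Finset ℕ)

/-- complement set -/
def Sc : Finset ℕ := Finset.range (μ.card - μ.rowLen 1) \ S

def Tf (i j : ℕ) : ℕ :=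
  if (i, j) ∈ μ then
    if i = 0 then
      if j < μ.rowLen 1 then j + 1
      else μ.rowLen 1 + 1 + sEl (Sc μ S) (j - μ.rowLen 1)
    else μ.rowLen 1 + 1 + sEl S (rnk μ (i, j))
  else 0

variable {μ S}
variable (hS : S ⊆ Finset.range (μ.card - μ.rowLen 1)) (hScard : S.card = (D μ).card)

include hS hScard

lemma card_Sc : (Sc μ S).card = μ.rowLen 0 - μ.rowLen 1 := by
  rw [Sc, Finset.card_sdiff_of_subset hS, Finset.card_range, hScard, card_D]
  have h0 := rowLen0_le μ
  have h1 := rowLen1_le_rowLen0 μ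
  omega

lemma tail_idx {j : ℕ} (hj : (0, j) ∈ μ) (hj1 : μ.rowLen 1 ≤ j) :
    j - μ.rowLen 1 < (Sc μ S).card := by
  rw [card_Sc hS hScard]
  have : j < μ.rowLen 0 := YoungDiagram.mem_iff_lt_rowLen.mp hj
  omega

omit hS hScard

lemma Tf_head {j : ℕ} (hj : (0, j) ∈ μ) (h1 : j < μ.rowLen 1) : Tf μ S 0 j = j + 1 := by
  rw [Tf, if_pos hj, if_pos rfl, if_pos h1]

lemma Tf_tail {j : ℕ} (hj : (0, j) ∈ μ) (h1 : μ.rowLen 1 ≤ j) :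
    Tf μ S 0 j = μ.rowLen 1 + 1 + sEl (Sc μ S) (j - μ.rowLen 1) := by
  rw [Tf, if_pos hj, if_pos rfl, if_neg (by omega)]

lemma Tf_D {i j : ℕ} (hij : (i, j) ∈ D μ) :
    Tf μ S i j = μ.rowLen 1 + 1 + sEl S (rnk μ (i, j)) := by
  rw [mem_D] at hij
  rw [Tf, if_pos (by simpa using hij.1), if_neg hij.2]

lemma D_snd_lt {i j : ℕ} (hij : (i, j) ∈ D μ) : j < μ.rowLen 1 := by
  rw [mem_D] at hij
  have h1 : j < μ.rowLen i := YoungDiagram.mem_iff_lt_rowLen.mp (by simpa using hij.1)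
  have h2 : μ.rowLen i ≤ μ.rowLen 1 := μ.rowLen_anti 1 i (by omega)
  omega

lemma rnk_lt_Scard (hScard : S.card = (D μ).card) {i j : ℕ} (hij : (i, j) ∈ D μ) :
    rnk μ (i, j) < S.card := hScard ▸ rnk_lt hij

/-- The tableau associated to a subset `S`. -/
def TS (hS : S ⊆ Finset.range (μ.card - μ.rowLen 1)) (hScard : S.card = (D μ).card) :
    SemistandardYoungTableau μ where
  entry := Tf μ S
  row_weak' := by
    intro i j1 j2 hj hcell
    have hcell1 : (i, j1) ∈ μ := μ.up_left_mem le_rfl hj.le hcell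
    by_cases hi : i = 0
    · subst hi
      by_cases h2 : j2 < μ.rowLen 1
      · rw [Tf_head hcell1 (by omega), Tf_head hcell h2]; omega
      · rw [Tf_tail hcell (by omega)]
        by_cases h1 : j1 < μ.rowLen 1
        · rw [Tf_head hcell1 h1]; omega
        · rw [Tf_tail hcell1 (by omega)]
          have := sEl_lt (s := Sc μ S) (k1 := j1 - μ.rowLen 1) (k2 := j2 - μ.rowLen 1)
            (by omega) (tail_idx hS hScard hcell (by omega))
          omega
    · have hd1 : (i, j1) ∈ D μ := mem_D.mpr ⟨hcell1, hi⟩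
      have hd2 : (i, j2) ∈ D μ := mem_D.mpr ⟨hcell, hi⟩
      rw [Tf_D hd1, Tf_D hd2]
      have hr := rnk_strict hd1 hd2 (by simp only [en]; omega)
      have := sEl_lt hr (rnk_lt_Scard hScard hd2)
      omega
  col_strict' := by
    intro i1 i2 j hi hcell
    have hcell1 : (i1, j) ∈ μ := μ.up_left_mem hi.le le_rfl hcell
    have hd2 : (i2, j) ∈ D μ := mem_D.mpr ⟨hcell, by omega⟩
    rw [Tf_D hd2]
    by_cases h1 : i1 = 0
    · subst h1
      have hjlt : j < μ.rowLen 1 := D_snd_lt hd2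
      rw [Tf_head hcell1 hjlt]
      omega
    · have hd1 : (i1, j) ∈ D μ := mem_D.mpr ⟨hcell1, h1⟩
      rw [Tf_D hd1]
      have hn : 0 < μ.card := by have := snd_lt_card hcell; omega
      have hr := rnk_strict hd1 hd2 (by simp only [en]; nlinarith)
      have := sEl_lt hr (rnk_lt_Scard hScard hd2)
      omega
  zeros' := by
    intro i j h
    rw [Tf, if_neg h]

end tableau

section std
variable {μ : YoungDiagram} {S : Finset ℕ}
variable (hS : S ⊆ Finset.range (μ.card - μ.rowLen 1)) (hScard : S.card = (D μ).card)

include hS hScard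

lemma Tf_row_strict {i j1 j2 : ℕ} (hj : j1 < j2) (hcell : (i, j2) ∈ μ) :
    Tf μ S i j1 < Tf μ S i j2 := by
  have hcell1 : (i, j1) ∈ μ := μ.up_left_mem le_rfl hj.le hcell
  by_cases hi : i = 0
  · subst hi
    by_cases h2 : j2 < μ.rowLen 1
    · rw [Tf_head hcell1 (by omega), Tf_head hcell h2]; omega
    · rw [Tf_tail hcell (by omega)]
      by_cases h1 : j1 < μ.rowLen 1
      · rw [Tf_head hcell1 h1]; omega
      · rw [Tf_tail hcell1 (by omega)]
        have := sEl_lt (s := Sc μ S) (k1 := j1 - μ.rowLen 1) (k2 := j2 - μ.rowLen 1)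
          (by omega) (tail_idx hS hScard hcell (by omega))
        omega
  · have hd1 : (i, j1) ∈ D μ := mem_D.mpr ⟨hcell1, hi⟩
    have hd2 : (i, j2) ∈ D μ := mem_D.mpr ⟨hcell, hi⟩
    rw [Tf_D hd1, Tf_D hd2]
    have hr := rnk_strict hd1 hd2 (by simp only [en]; omega)
    have := sEl_lt hr (rnk_lt_Scard hScard hd2)
    omega

lemma Tf_range {i j : ℕ} (hcell : (i, j) ∈ μ) :
    Tf μ S i j ∈ Finset.Icc 1 μ.card := by
  have hL0 := rowLen0_le μ
  have hL1 := rowLen1_le_rowLen0 μ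
  rw [Finset.mem_Icc]
  by_cases hi : i = 0
  · subst hi
    by_cases h1 : j < μ.rowLen 1
    · rw [Tf_head hcell h1]
      omega
    · rw [Tf_tail hcell (by omega)]
      have hm : sEl (Sc μ S) (j - μ.rowLen 1) ∈ Sc μ S :=
        sEl_mem (tail_idx hS hScard hcell (by omega))
      have : sEl (Sc μ S) (j - μ.rowLen 1) ∈ Finset.range (μ.card - μ.rowLen 1) :=
        (Finset.sdiff_subset) hm
      rw [Finset.mem_range] at this
      omega
  · have hd : (i, j) ∈ D μ := mem_D.mpr ⟨hcell, hi⟩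
    rw [Tf_D hd]
    have hm : sEl S (rnk μ (i, j)) ∈ S := sEl_mem (rnk_lt_Scard hScard hd)
    have := Finset.mem_range.mp (hS hm)
    omega

lemma Tf_injOn : Set.InjOn (fun c : ℕ × ℕ => Tf μ S c.1 c.2) ↑μ.cells := by
  rintro ⟨i, j⟩ hc ⟨i', j'⟩ hc' h
  simp only [Finset.mem_coe, YoungDiagram.mem_cells] at hc hc'
  simp only at h
  -- classify both cells
  by_cases hi : i = 0 <;> by_cases hi' : i' = 0
  · subst hi; subst hi'
    by_cases h1 : j < μ.rowLen 1 <;> by_cases h1' : j' < μ.rowLen 1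
    · rw [Tf_head hc h1, Tf_head hc' h1'] at h
      have : j = j' := by omega
      simp [this]
    · rw [Tf_head hc h1, Tf_tail hc' (by omega)] at h; omega
    · rw [Tf_tail hc (by omega), Tf_head hc' h1'] at h; omega
    · rw [Tf_tail hc (by omega), Tf_tail hc' (by omega)] at h
      have hidx := tail_idx hS hScard hc (by omega)
      have hidx' := tail_idx hS hScard hc' (by omega)
      have : j - μ.rowLen 1 = j' - μ.rowLen 1 := by
        by_contra hne
        rcases Nat.lt_or_ge (j - μ.rowLen 1) (j' - μ.rowLen 1) with hl | hl
        · have := sEl_lt hl hidx'; omega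
        · have hl' : j' - μ.rowLen 1 < j - μ.rowLen 1 := by omega
          have := sEl_lt hl' hidx; omega
      have : j = j' := by omega
      simp [this]
  · -- (0, j) tail/head vs D cell
    subst hi
    have hd' : (i', j') ∈ D μ := mem_D.mpr ⟨hc', hi'⟩
    rw [Tf_D hd'] at h
    have hmem' : sEl S (rnk μ (i', j')) ∈ S := sEl_mem (rnk_lt_Scard hScard hd')
    by_cases h1 : j < μ.rowLen 1
    · rw [Tf_head hc h1] at h; omega
    · rw [Tf_tail hc (by omega)] at h
      have hmem : sEl (Sc μ S) (j - μ.rowLen 1) ∈ Sc μ S :=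
        sEl_mem (tail_idx hS hScard hc (by omega))
      have hnot : sEl (Sc μ S) (j - μ.rowLen 1) ∉ S := by
        have h2 := hmem
        rw [Sc, Finset.mem_sdiff] at h2
        exact h2.2
      have he : sEl (Sc μ S) (j - μ.rowLen 1) = sEl S (rnk μ (i', j')) := by omega
      rw [← he] at hmem'
      exact (hnot hmem').elim
  · -- symmetric
    subst hi'
    have hd : (i, j) ∈ D μ := mem_D.mpr ⟨hc, hi⟩
    rw [Tf_D hd] at h
    have hmem : sEl S (rnk μ (i, j)) ∈ S := sEl_mem (rnk_lt_Scard hScard hd)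
    by_cases h1 : j' < μ.rowLen 1
    · rw [Tf_head hc' h1] at h; omega
    · rw [Tf_tail hc' (by omega)] at h
      have hmem' : sEl (Sc μ S) (j' - μ.rowLen 1) ∈ Sc μ S :=
        sEl_mem (tail_idx hS hScard hc' (by omega))
      have hnot : sEl (Sc μ S) (j' - μ.rowLen 1) ∉ S := by
        have h2 := hmem'
        rw [Sc, Finset.mem_sdiff] at h2
        exact h2.2
      have he : sEl (Sc μ S) (j' - μ.rowLen 1) = sEl S (rnk μ (i, j)) := by omega
      rw [← he] at hmem
      exact (hnot hmem).elim
  · -- both D cells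
    have hd : (i, j) ∈ D μ := mem_D.mpr ⟨hc, hi⟩
    have hd' : (i', j') ∈ D μ := mem_D.mpr ⟨hc', hi'⟩
    rw [Tf_D hd, Tf_D hd'] at h
    have : rnk μ (i, j) = rnk μ (i', j') := by
      by_contra hne
      rcases Nat.lt_or_ge (rnk μ (i, j)) (rnk μ (i', j')) with hl | hl
      · have := sEl_lt hl (rnk_lt_Scard hScard hd'); omega
      · have hl' : rnk μ (i', j') < rnk μ (i, j) := by omega
        have := sEl_lt hl' (rnk_lt_Scard hScard hd); omega
    exact rnk_injOn μ hd hd' this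

omit hS in
lemma Tf_recover : (D μ).image (fun c => Tf μ S c.1 c.2 - (μ.rowLen 1 + 1)) = S := by
  have h1 : (D μ).image (fun c => Tf μ S c.1 c.2 - (μ.rowLen 1 + 1))
      = (D μ).image (fun c => sEl S (rnk μ c)) := by
    apply Finset.image_congr
    rintro ⟨i, j⟩ hc
    simp only
    rw [Tf_D hc]
    omega
  rw [h1]
  have h2 : (D μ).image (fun c => sEl S (rnk μ c)) = ((D μ).image (rnk μ)).image (sEl S) := by
    rw [Finset.image_image]; rfl
  rw [h2, rnk_image, ← hScard, sEl_image]

end std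

lemma finite_std (μ : YoungDiagram) :
    Finite {T : SemistandardYoungTableau μ // IsStandardYT μ T} := by
  let f : {T : SemistandardYoungTableau μ // IsStandardYT μ T} →
      ({c // c ∈ μ.cells} → Fin (μ.card + 1)) :=
    fun T c => ⟨T.1 c.1.1 c.1.2, by
      have := T.2.2.1 c.1 c.2
      rw [Finset.mem_Icc] at this
      omega⟩
  have hf : Function.Injective f := by
    intro T T' h
    apply Subtype.ext
    apply SemistandardYoungTableau.ext
    intro i j
    by_cases hc : (i, j) ∈ μ
    · have := congrFun h ⟨(i, j), (YoungDiagram.mem_cells _).mpr hc⟩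
      simpa [f, Fin.mk.injEq] using this
    · rw [T.1.zeros hc, T'.1.zeros hc]
  exact Finite.of_injective f hf

lemma choose_le_fSYT (μ : YoungDiagram) :
    Nat.choose (μ.card - μ.rowLen 1) (D μ).card ≤ fSYT μ := by
  classical
  have : Finite {T : SemistandardYoungTableau μ // IsStandardYT μ T} := finite_std μ
  set P := (Finset.range (μ.card - μ.rowLen 1)).powersetCard (D μ).card with hP
  have hmem : ∀ S ∈ P, S ⊆ Finset.range (μ.card - μ.rowLen 1) ∧ S.card = (D μ).card := by
    intro S hS; rwa [Finset.mem_powersetCard] at hS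
  let g : {S // S ∈ P} → {T : SemistandardYoungTableau μ // IsStandardYT μ T} :=
    fun S => ⟨TS (hmem S.1 S.2).1 (hmem S.1 S.2).2,
      ⟨fun i j1 j2 hj hc => Tf_row_strict (hmem S.1 S.2).1 (hmem S.1 S.2).2 hj hc,
       fun c hc => Tf_range (hmem S.1 S.2).1 (hmem S.1 S.2).2 ((YoungDiagram.mem_cells _).mp hc),
       Tf_injOn (hmem S.1 S.2).1 (hmem S.1 S.2).2⟩⟩
  have hg : Function.Injective g := by
    intro S S' h
    have h1 : (TS (hmem S.1 S.2).1 (hmem S.1 S.2).2 : SemistandardYoungTableau μ)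
        = TS (hmem S'.1 S'.2).1 (hmem S'.1 S'.2).2 := congrArg Subtype.val h
    have h2 : ∀ i j, Tf μ S.1 i j = Tf μ S'.1 i j := by
      intro i j
      exact congrFun (DFunLike.congr_fun h1 i) j
    apply Subtype.ext
    rw [← Tf_recover (hmem S.1 S.2).2, ← Tf_recover (hmem S'.1 S'.2).2]
    apply Finset.image_congr
    intro c _
    simp only [h2]
  have hle := Nat.card_le_card_of_injective g hg
  rw [Nat.card_eq_finsetCard] at hle
  have hPcard : P.card = Nat.choose (μ.card - μ.rowLen 1) (D μ).card := by
    rw [hP, Finset.card_powersetCard, Finset.card_range]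
  rw [hPcard] at hle
  exact hle.trans_eq rfl

lemma pow_div_le_choose (A : ℕ) : ∀ m : ℕ, A ≤ m → ((m : ℝ) / A) ^ A ≤ (m.choose A : ℝ) := by
  induction A with
  | zero => intro m _; simp
  | succ A ih =>
    intro m hm
    obtain ⟨k, rfl⟩ : ∃ k, m = k + 1 := ⟨m - 1, by omega⟩
    have hA : A ≤ k := by omega
    have ihk := ih k hA
    have hchoose : ((k + 1 : ℕ) : ℝ) * (k.choose A : ℝ)
        = ((k + 1).choose (A + 1) : ℝ) * ((A + 1 : ℕ) : ℝ) := by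
      exact_mod_cast congrArg (Nat.cast (R := ℝ)) (Nat.add_one_mul_choose_eq k A)
    have hpos : (0 : ℝ) < (A : ℝ) + 1 := by positivity
    have key : ((k + 1 : ℝ) / ((A : ℝ) + 1)) ^ A ≤ (k.choose A : ℝ) := by
      rcases Nat.eq_zero_or_pos A with h0 | hApos
      · subst h0; simp
      · have hApos' : (0 : ℝ) < (A : ℝ) := by exact_mod_cast hApos
        have hfrac : (k + 1 : ℝ) / ((A : ℝ) + 1) ≤ (k : ℝ) / (A : ℝ) := by
          rw [div_le_div_iff₀ hpos hApos']
          have : (A : ℝ) ≤ (k : ℝ) := by exact_mod_cast hA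
          nlinarith
        calc ((k + 1 : ℝ) / ((A : ℝ) + 1)) ^ A ≤ ((k : ℝ) / (A : ℝ)) ^ A :=
              pow_le_pow_left₀ (by positivity) hfrac A
          _ ≤ _ := ihk
    have hstep : ((k + 1 : ℝ) / ((A : ℝ) + 1)) ^ (A + 1)
        ≤ ((k + 1 : ℝ) / ((A : ℝ) + 1)) * (k.choose A : ℝ) := by
      rw [pow_succ']
      exact mul_le_mul_of_nonneg_left key (by positivity)
    have hfin : ((k + 1 : ℝ) / ((A : ℝ) + 1)) * (k.choose A : ℝ)
        = ((k + 1).choose (A + 1) : ℝ) := by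
      rw [div_mul_eq_mul_div, div_eq_iff (by positivity : ((A : ℝ) + 1) ≠ 0)]
      push_cast at hchoose ⊢
      linarith
    calc (((k + 1 : ℕ) : ℝ) / ((A + 1 : ℕ) : ℝ)) ^ (A + 1)
        = ((k + 1 : ℝ) / ((A : ℝ) + 1)) ^ (A + 1) := by push_cast; ring_nf
      _ ≤ ((k + 1 : ℝ) / ((A : ℝ) + 1)) * (k.choose A : ℝ) := hstep
      _ = ((k + 1).choose (A + 1) : ℝ) := hfin

end Stmt10Aux

/-- If `λ` is a partition of `n` with `λ₁ ≥ 3n/4` and `A = n − λ₁`, then the dimension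
of the irreducible representation of `S_n` indexed by `λ` satisfies
`χ^λ(1) ≥ (n/(2A))^A`; in particular if `A > √n` then `χ^λ(1) ≥ 2^√n`. -/
theorem stmt_10 (n : ℕ) (μ : YoungDiagram) (hcard : μ.card = n)
    (hrow : 3 * n ≤ 4 * μ.rowLen 0) :
    ((n : ℝ) / (2 * (n - μ.rowLen 0 : ℕ))) ^ (n - μ.rowLen 0 : ℕ) ≤ (fSYT μ : ℝ) ∧
    (Real.sqrt n < (n - μ.rowLen 0 : ℕ) → (2 : ℝ) ^ (Real.sqrt n) ≤ (fSYT μ : ℝ)) := by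
  open Stmt10Aux in
  have hL0n : μ.rowLen 0 ≤ n := hcard ▸ Stmt10Aux.rowLen0_le μ
  have hL1L0 : μ.rowLen 1 ≤ μ.rowLen 0 := Stmt10Aux.rowLen1_le_rowLen0 μ
  have hDA : (Stmt10Aux.D μ).card = n - μ.rowLen 0 := by
    rw [Stmt10Aux.card_D, hcard]
  have hL1A : μ.rowLen 1 ≤ n - μ.rowLen 0 := hDA ▸ Stmt10Aux.rowLen1_le_cardD μ
  set A : ℕ := n - μ.rowLen 0 with hA
  set m : ℕ := n - μ.rowLen 1 with hm
  have hAm : A ≤ m := by omega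
  have hchoose : Nat.choose m A ≤ fSYT μ := by
    have := Stmt10Aux.choose_le_fSYT μ
    rwa [hcard, hDA] at this
  have hfirst : ((n : ℝ) / (2 * (A : ℕ))) ^ (A : ℕ) ≤ (fSYT μ : ℝ) := by
    have hpc : ((m : ℝ) / A) ^ A ≤ (fSYT μ : ℝ) := by
      refine (Stmt10Aux.pow_div_le_choose A m hAm).trans ?_
      exact_mod_cast Nat.cast_le.mpr hchoose
    rcases Nat.eq_zero_or_pos A with h0 | hApos
    · rw [h0] at hpc ⊢
      simpa using hpc
    · refine le_trans ?_ hpc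
      apply pow_le_pow_left₀ (by positivity)
      have hn2m : n ≤ 2 * m := by omega
      have hApos' : (0 : ℝ) < (A : ℝ) := by exact_mod_cast hApos
      rw [div_le_div_iff₀ (by positivity) hApos']
      have : (n : ℝ) ≤ 2 * (m : ℝ) := by exact_mod_cast hn2m
      nlinarith
  refine ⟨hfirst, fun hsq => ?_⟩
  have hApos : 1 ≤ A := by
    by_contra h
    have : A = 0 := by omega
    rw [this] at hsq
    simp only [Nat.cast_zero] at hsq
    exact absurd hsq (not_lt.mpr (Real.sqrt_nonneg n))
  have h4A : 4 * A ≤ n := by omega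
  have h2le : (2 : ℝ) ≤ (n : ℝ) / (2 * (A : ℕ)) := by
    rw [le_div_iff₀ (by positivity)]
    have : (4 : ℝ) * (A : ℝ) ≤ (n : ℝ) := by exact_mod_cast h4A
    nlinarith
  calc (2 : ℝ) ^ (Real.sqrt n) ≤ (2 : ℝ) ^ ((A : ℕ) : ℝ) :=
        Real.rpow_le_rpow_of_exponent_le one_le_two hsq.le
    _ = (2 : ℝ) ^ (A : ℕ) := Real.rpow_natCast 2 A
    _ ≤ ((n : ℝ) / (2 * (A : ℕ))) ^ (A : ℕ) := pow_le_pow_left₀ (by norm_num) h2le A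
    _ ≤ (fSYT μ : ℝ) := hfirst
end

section
/- Let σ = ((13)(24); σ_a, σ_b, σ_a⁻¹, σ_b⁻¹) and τ = ((1234); id, id, id, id) in the wreath product C₄≀S_n, acting on {1,2,3,4} × {1,...,n} via (h;f)·(i,j) = (h(i), f(h(i))(j)). Then the number of orbits of the cyclic group ⟨στ⟩ on {1,2,3,4} × {1,...,n} equals the number of cycles of the commutator-type product π' = π₁∘π₂∘π₃∘π₄ ∈ S_n, where στ = ((1432); π₁, π₂, π₃, π₄). -/
open scoped Classical in
/-- The number of cycles of a permutation, including fixed points. -/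
noncomputable def numCycles {n : ℕ} (σ : Equiv.Perm (Fin n)) : ℕ :=
  Multiset.card σ.cycleType + (Finset.univ.filter fun x => σ x = x).card

/-- The permutation of `[4] × [n]` given by the element
`στ = ((1432); π₁, π₂, π₃, π₄) = ((1432); σ_a, σ_b, σ_a⁻¹, σ_b⁻¹)` of the wreath
product `C₄ ≀ S_n`, acting by `(h;f)·(i,j) = (h i, f (h i) j)`.  Here the `4`-cycle
`(1432)` is realized (0-indexed) as `(finRotate 4)⁻¹`. -/
def sigmaTau {n : ℕ} (σa σb : Equiv.Perm (Fin n)) : Equiv.Perm (Fin 4 × Fin n) where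
  toFun p := ((finRotate 4)⁻¹ p.1, ![σa, σb, σa⁻¹, σb⁻¹] ((finRotate 4)⁻¹ p.1) p.2)
  invFun q := (finRotate 4 q.1, (![σa, σb, σa⁻¹, σb⁻¹] q.1)⁻¹ q.2)
  left_inv p := by simp
  right_inv q := by simp [-finRotate_succ_apply]


open Equiv Equiv.Perm MulAction



lemma orbit_iff_sameCycle' {α : Type*} (σ : Perm α) (x y : α) :
    y ∈ MulAction.orbit (Subgroup.zpowers σ) x ↔ σ.SameCycle x y := by
  constructor
  · rintro ⟨⟨g, i, rfl⟩, rfl⟩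
    exact ⟨i, rfl⟩
  · rintro ⟨i, rfl⟩
    exact ⟨⟨σ ^ i, i, rfl⟩, rfl⟩

lemma mk_eq_mk_iff_sameCycle {α : Type*} (σ : Perm α) (x y : α) :
    (Quotient.mk'' x : MulAction.orbitRel.Quotient (Subgroup.zpowers σ) α) =
      Quotient.mk'' y ↔ σ.SameCycle x y := by
  rw [Quotient.eq'']
  show (MulAction.orbitRel _ _).r x y ↔ _
  rw [MulAction.orbitRel_apply, orbit_iff_sameCycle']
  exact Equiv.Perm.sameCycle_comm

lemma semiconj_pow {X Y : Type*} (u : Perm X) (v : Perm Y) (e : X → Y)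
    (h : ∀ x, e (u x) = v (e x)) : ∀ (m : ℕ) (x : X), e ((u ^ m) x) = (v ^ m) (e x) := by
  intro m
  induction m with
  | zero => simp
  | succ k ih =>
    intro x
    rw [pow_succ, pow_succ, Equiv.Perm.mul_apply, Equiv.Perm.mul_apply, ih, h]

lemma semiconj_zpow {X Y : Type*} (u : Perm X) (v : Perm Y) (e : X → Y)
    (h : ∀ x, e (u x) = v (e x)) : ∀ (k : ℤ) (x : X), e ((u ^ k) x) = (v ^ k) (e x) := by
  have hinv : ∀ (m : ℕ) (x : X), e (((u ^ m)⁻¹) x) = ((v ^ m)⁻¹) (e x) := by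
    intro m x
    apply (v ^ m).injective
    rw [← Equiv.Perm.mul_apply, mul_inv_cancel, Equiv.Perm.one_apply, ← semiconj_pow u v e h m,
      ← Equiv.Perm.mul_apply, mul_inv_cancel, Equiv.Perm.one_apply]
  intro k x
  rcases k with m | m
  · simpa using semiconj_pow u v e h m x
  · rw [zpow_negSucc, zpow_negSucc]
    exact hinv (m + 1) x

lemma sigmaTau_pow_four {n : ℕ} (σa σb : Perm (Fin n)) (j : Fin n) :
    ((sigmaTau σa σb) ^ 4) (0, j) = (0, (σa * σb * σa⁻¹ * σb⁻¹) j) := by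
  have e0 : (finRotate 4)⁻¹ (0 : Fin 4) = 3 := by decide
  have e3 : (finRotate 4)⁻¹ (3 : Fin 4) = 2 := by decide
  have e2 : (finRotate 4)⁻¹ (2 : Fin 4) = 1 := by decide
  have e1 : (finRotate 4)⁻¹ (1 : Fin 4) = 0 := by decide
  show (sigmaTau σa σb) ((sigmaTau σa σb) ((sigmaTau σa σb) ((sigmaTau σa σb) (0, j)))) = _
  simp [sigmaTau, e0, e1, e2, e3, Equiv.Perm.mul_apply, -finRotate_symm_apply, -Equiv.Perm.coe_inv]

lemma rot_pow_val : ∀ x : Fin 4, (((finRotate 4)⁻¹ : Perm (Fin 4)) ^ x.val) x = 0 := by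
  decide

lemma rot_zpow_zero {i : ℤ} (h : (((finRotate 4)⁻¹ : Perm (Fin 4)) ^ i) 0 = 0) :
    (4 : ℤ) ∣ i := by
  have r4 : (((finRotate 4)⁻¹ : Perm (Fin 4)) ^ (4 : ℤ)) = 1 := by
    rw [show (4:ℤ) = ((4:ℕ):ℤ) from rfl, zpow_natCast]
    decide
  have hi : i = 4 * (i / 4) + i % 4 := (Int.mul_ediv_add_emod i 4).symm
  have hsplit : (((finRotate 4)⁻¹ : Perm (Fin 4)) ^ i) =
      (((finRotate 4)⁻¹ : Perm (Fin 4)) ^ (i % 4)) := by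
    conv_lhs => rw [hi]
    rw [zpow_add, zpow_mul, r4, one_zpow, one_mul]
  rw [hsplit] at h
  have h04 : 0 ≤ i % 4 := Int.emod_nonneg i (by norm_num)
  have h4 : i % 4 < 4 := Int.emod_lt_of_pos i (by norm_num)
  set m := (i % 4).toNat with hm
  have hmi : (i % 4) = (m : ℤ) := (Int.toNat_of_nonneg h04).symm
  rw [hmi, zpow_natCast] at h
  have hm4 : m < 4 := by omega
  interval_cases m
  · omega
  · exact absurd h (by decide)
  · exact absurd h (by decide)
  · exact absurd h (by decide)


open scoped Classical in
lemma card_orbits_eq {n : ℕ} (σ : Perm (Fin n)) :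
    Nat.card (MulAction.orbitRel.Quotient (Subgroup.zpowers σ) (Fin n)) =
      Multiset.card σ.cycleType + (Finset.univ.filter fun x => σ x = x).card := by
  classical
  set Q := MulAction.orbitRel.Quotient (Subgroup.zpowers σ) (Fin n) with hQ
  have key : ∀ x y : Fin n,
      (Quotient.mk'' x : Q) = Quotient.mk'' y ↔ σ.SameCycle x y := by
    intro x y
    rw [Quotient.eq'']
    show (MulAction.orbitRel _ _).r x y ↔ _
    rw [MulAction.orbitRel_apply, orbit_iff_sameCycle']
    exact Equiv.Perm.sameCycle_comm
  let f : Fin n → ({c : Perm (Fin n) // c ∈ σ.cycleFactorsFinset} ⊕ {x : Fin n // σ x = x}) := fun x =>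
    if h : σ x = x then Sum.inr ⟨x, h⟩
    else Sum.inl ⟨σ.cycleOf x,
      Equiv.Perm.cycleOf_mem_cycleFactorsFinset_iff.2 (Equiv.Perm.mem_support.2 h)⟩
  have hf : ∀ x y : Fin n, σ.SameCycle x y → f x = f y := by
    intro x y h
    by_cases hx : σ x = x
    · have hy : x = y := h.eq_of_left hx
      subst hy; rfl
    · have hy : ¬ σ y = y := fun hy => hx (h.apply_eq_self_iff.mpr hy)
      show dite _ _ _ = dite _ _ _
      rw [dif_neg hx, dif_neg hy]
      exact congrArg Sum.inl (Subtype.ext h.cycleOf_eq)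
  let F : Q → ({c : Perm (Fin n) // c ∈ σ.cycleFactorsFinset} ⊕ {x : Fin n // σ x = x}) :=
    Quotient.lift f (fun x y h => hf x y ((key x y).1 (Quotient.sound h)))
  have hbij : Function.Bijective F := by
    constructor
    · rintro ⟨x⟩ ⟨y⟩ h
      refine (key x y).2 ?_
      change f x = f y at h
      by_cases hx : σ x = x <;> by_cases hy : σ y = y
      · rw [show f x = Sum.inr ⟨x, hx⟩ from dif_pos hx,
          show f y = Sum.inr ⟨y, hy⟩ from dif_pos hy] at h
        have hxy : x = y := by simpa using h
        subst hxy; exact Equiv.Perm.SameCycle.refl _ _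
      · rw [show f x = Sum.inr ⟨x, hx⟩ from dif_pos hx, show f y = _ from dif_neg hy] at h
        exact absurd h (by simp)
      · rw [show f y = Sum.inr ⟨y, hy⟩ from dif_pos hy, show f x = _ from dif_neg hx] at h
        exact absurd h (by simp)
      · rw [show f x = _ from dif_neg hx, show f y = _ from dif_neg hy] at h
        have hc : σ.cycleOf x = σ.cycleOf y := Subtype.ext_iff.1 (Sum.inl.inj h)
        have hmem : y ∈ (σ.cycleOf x).support := by
          rw [hc, Equiv.Perm.mem_support_cycleOf_iff]
          exact ⟨Equiv.Perm.SameCycle.refl _ _, Equiv.Perm.mem_support.2 hy⟩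
        exact (Equiv.Perm.mem_support_cycleOf_iff.1 hmem).1
    · rintro (⟨c, hc⟩ | ⟨x, hx⟩)
      · obtain ⟨x, hx⟩ :=
          (Equiv.Perm.mem_cycleFactorsFinset_iff.1 hc).1.nonempty_support
        refine ⟨Quotient.mk'' x, ?_⟩
        have hxs : σ x ≠ x :=
          Equiv.Perm.mem_support.1 (Equiv.Perm.mem_cycleFactorsFinset_support_le hc hx)
        show f x = _
        rw [show f x = _ from dif_neg hxs]
        exact congrArg Sum.inl (Subtype.ext (Equiv.Perm.cycle_is_cycleOf hx hc).symm)
      · exact ⟨Quotient.mk'' x, dif_pos hx⟩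
  rw [Nat.card_congr (Equiv.ofBijective F hbij), Nat.card_sum]
  congr 1
  · rw [Nat.card_eq_fintype_card, Fintype.card_coe, Equiv.Perm.cycleType]
    simp
  · rw [Nat.card_eq_fintype_card, Fintype.card_subtype]

/-- The number of orbits of the cyclic group `⟨στ⟩` on `[4] × [n]` equals the number
of cycles of `π' = π₁ ∘ π₂ ∘ π₃ ∘ π₄ = σ_a σ_b σ_a⁻¹ σ_b⁻¹ ∈ S_n`. -/
theorem stmt_17 (n : ℕ) (σa σb : Equiv.Perm (Fin n)) :
    Nat.card (MulAction.orbitRel.Quotient (Subgroup.zpowers (sigmaTau σa σb))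
        (Fin 4 × Fin n)) =
      numCycles (σa * σb * σa⁻¹ * σb⁻¹) := by
  classical
  set T := sigmaTau σa σb with hT
  set c := σa * σb * σa⁻¹ * σb⁻¹ with hc
  have hsemi : ∀ j : Fin n,
      (fun j : Fin n => ((0 : Fin 4), j)) (c j) = (T ^ 4) ((fun j : Fin n => ((0 : Fin 4), j)) j) :=
    fun j => (sigmaTau_pow_four σa σb j).symm
  have hT4k : ∀ (k : ℤ) (j : Fin n), (T ^ (4 * k)) ((0 : Fin 4), j) = ((0 : Fin 4), (c ^ k) j) := by
    intro k j
    rw [zpow_mul, show (4 : ℤ) = ((4 : ℕ) : ℤ) from rfl, zpow_natCast]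
    exact (semiconj_zpow c (T ^ 4) (fun j : Fin n => ((0 : Fin 4), j)) hsemi k j).symm
  have hfst : ∀ (k : ℤ) (p : Fin 4 × Fin n),
      ((T ^ k) p).1 = (((finRotate 4)⁻¹ : Perm (Fin 4)) ^ k) p.1 :=
    fun k p => semiconj_zpow T (finRotate 4)⁻¹ Prod.fst (fun _ => rfl) k p
  have hfstn : ∀ (m : ℕ) (p : Fin 4 × Fin n),
      ((T ^ m) p).1 = (((finRotate 4)⁻¹ : Perm (Fin 4)) ^ m) p.1 :=
    fun m p => semiconj_pow T (finRotate 4)⁻¹ Prod.fst (fun _ => rfl) m p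
  let G : MulAction.orbitRel.Quotient (Subgroup.zpowers c) (Fin n) →
      MulAction.orbitRel.Quotient (Subgroup.zpowers T) (Fin 4 × Fin n) :=
    Quotient.lift (fun j => Quotient.mk'' ((0 : Fin 4), j)) (by
      intro j j' hjj
      have hsc : c.SameCycle j j' :=
        (mk_eq_mk_iff_sameCycle c j j').1 (Quotient.sound hjj)
      obtain ⟨k, hk⟩ := hsc
      exact (mk_eq_mk_iff_sameCycle T _ _).2 ⟨4 * k, by rw [hT4k, hk]⟩)
  have hbij : Function.Bijective G := by
    constructor
    · rintro ⟨j⟩ ⟨j'⟩ h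
      change (Quotient.mk'' ((0:Fin 4), j) : MulAction.orbitRel.Quotient _ _)
        = Quotient.mk'' ((0:Fin 4), j') at h
      obtain ⟨i, hi⟩ := (mk_eq_mk_iff_sameCycle T _ _).1 h
      have h0 : (((finRotate 4)⁻¹ : Perm (Fin 4)) ^ i) (0 : Fin 4) = 0 := by
        have := hfst i ((0 : Fin 4), j)
        rw [hi] at this
        exact this.symm
      obtain ⟨k, rfl⟩ := rot_zpow_zero h0
      rw [hT4k] at hi
      have : (c ^ k) j = j' := congrArg Prod.snd hi
      exact (mk_eq_mk_iff_sameCycle c j j').2 ⟨k, this⟩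
    · rintro ⟨p⟩
      have h0 : ((T ^ p.1.val) p).1 = 0 := by
        rw [hfstn]; exact rot_pow_val p.1
      refine ⟨Quotient.mk'' ((T ^ p.1.val) p).2, ?_⟩
      show (Quotient.mk'' ((0:Fin 4), ((T ^ p.1.val) p).2)
          : MulAction.orbitRel.Quotient _ _) = Quotient.mk'' p
      have hp : ((0 : Fin 4), ((T ^ p.1.val) p).2) = (T ^ p.1.val) p :=
        Prod.ext h0.symm rfl
      rw [hp]
      exact (mk_eq_mk_iff_sameCycle T _ _).2
        (Equiv.Perm.SameCycle.symm ⟨(p.1.val : ℤ), by rw [zpow_natCast]⟩)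
  rw [← Nat.card_congr (Equiv.ofBijective G hbij), card_orbits_eq, numCycles]
end
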